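/- For real numbers 0 < ε < y < 1, the Kullback–Leibler divergence between Bernoulli distributions with parameters y − ε and y satisfies KL(y − ε; y) < ε² / (y(1 − y)), where KL(a; b) = a·ln(a/b) + (1−a)·ln((1−a)/(1−b)). -/
import Mathlib

/-- KL-divergence bound for Bernoulli distributions:
`KL(y − ε; y) < ε² / (y(1 − y))` for `0 < ε < y < 1`. -/
theorem kl_bernoulli_bound (y ε : ℝ) (hε : 0 < ε) (hεy : ε < y) (hy : y < 1) :
    (y - ε) * Real.log ((y - ε) / y) + (1 - (y - ε)) * Real.log ((1 - (y - ε)) / (1 - y)) <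
      ε ^ 2 / (y * (1 - y)) := by
  have hy0 : 0 < y := hε.trans hεy
  have ha : 0 < y - ε := by linarith
  have h1y : 0 < 1 - y := by linarith
  have h1a : 0 < 1 - (y - ε) := by linarith
  have h1 : Real.log ((y - ε) / y) < (y - ε) / y - 1 := by
    apply Real.log_lt_sub_one_of_pos (div_pos ha hy0)
    intro h
    have := (div_eq_one_iff_eq (ne_of_gt hy0)).mp h
    linarith
  have h2 : Real.log ((1 - (y - ε)) / (1 - y)) < (1 - (y - ε)) / (1 - y) - 1 := by
    apply Real.log_lt_sub_one_of_pos (div_pos h1a h1y)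
    intro h
    have := (div_eq_one_iff_eq (ne_of_gt h1y)).mp h
    linarith
  have key : (y - ε) * ((y - ε) / y - 1) + (1 - (y - ε)) * ((1 - (y - ε)) / (1 - y) - 1)
      = ε ^ 2 / (y * (1 - y)) := by
    field_simp
    ring
  calc (y - ε) * Real.log ((y - ε) / y) + (1 - (y - ε)) * Real.log ((1 - (y - ε)) / (1 - y))
      < (y - ε) * ((y - ε) / y - 1) + (1 - (y - ε)) * ((1 - (y - ε)) / (1 - y) - 1) := by
        exact add_lt_add (mul_lt_mul_of_pos_left h1 ha)
          (mul_lt_mul_of_pos_left h2 h1a)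
    _ = ε ^ 2 / (y * (1 - y)) := key
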